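/- Any deterministic adaptive algorithm that, for every transitive tournament orientation of K_n, learns the full orientation via interventions (where each intervention on a set S reveals the directions of the cut edges between S and S^c, followed by closure under Meek rule R2: a−b oriented a→b if a→c and c→b known) must, for some orientation, produce a family of intervention sets that is a separating system on the n vertices. -/

import Mathlib

namespace Stmt18Aux

variable {n : ℕ}

/-- lexicographic strict order on bit sequences -/
def lex (B : ℕ → Set (Fin n)) (x y : Fin n) : Prop :=
  ∃ j, (∀ k, k < j → (x ∈ B k ↔ y ∈ B k)) ∧ x ∈ B j ∧ y ∉ B j

def prec (B : ℕ → Set (Fin n)) (x y : Fin n) : Prop :=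
  lex B x y ∨ (∀ j, (x ∈ B j ↔ y ∈ B j)) ∧ x < y

lemma lex_asymm {B : ℕ → Set (Fin n)} {x y : Fin n} (h : lex B x y) (h' : lex B y x) : False := by
  obtain ⟨j, hj, hxj, hyj⟩ := h
  obtain ⟨j', hj', hyj', hxj'⟩ := h'
  rcases lt_trichotomy j j' with hlt | rfl | hlt
  · exact hyj ((hj' j hlt).mpr hxj)
  · exact hyj hyj'
  · exact hxj' ((hj j' hlt).mpr hyj')

lemma lex_irrefl {B : ℕ → Set (Fin n)} {x : Fin n} (h : lex B x x) : False := by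
  obtain ⟨j, _, hxj, hyj⟩ := h; exact hyj hxj

lemma lex_trans {B : ℕ → Set (Fin n)} {x y z : Fin n}
    (h : lex B x y) (h' : lex B y z) : lex B x z := by
  obtain ⟨j, hj, hxj, hyj⟩ := h
  obtain ⟨j', hj', hyj', hzj'⟩ := h'
  rcases lt_trichotomy j j' with hlt | rfl | hlt
  · exact ⟨j, fun k hk => (hj k hk).trans (hj' k (hk.trans hlt)),
      hxj, fun hz => hyj ((hj' j hlt).mpr hz)⟩
  · exact absurd hyj' hyj
  · exact ⟨j', fun k hk => (hj k (hk.trans hlt)).trans (hj' k hk),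
      (hj j' hlt).mpr hyj', hzj'⟩

lemma lex_trans_tie {B : ℕ → Set (Fin n)} {x y z : Fin n}
    (h : lex B x y) (h' : ∀ j, (y ∈ B j ↔ z ∈ B j)) : lex B x z := by
  obtain ⟨j, hj, hxj, hyj⟩ := h
  exact ⟨j, fun k hk => (hj k hk).trans (h' k), hxj, fun hz => hyj ((h' j).mpr hz)⟩

lemma tie_lex_trans {B : ℕ → Set (Fin n)} {x y z : Fin n}
    (h : ∀ j, (x ∈ B j ↔ y ∈ B j)) (h' : lex B y z) : lex B x z := by
  obtain ⟨j, hj, hyj, hzj⟩ := h'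
  exact ⟨j, fun k hk => (h k).trans (hj k hk), (h j).mpr hyj, hzj⟩

lemma prec_trans {B : ℕ → Set (Fin n)} {x y z : Fin n}
    (h : prec B x y) (h' : prec B y z) : prec B x z := by
  rcases h with h | ⟨h, hxy⟩ <;> rcases h' with h' | ⟨h', hyz⟩
  · exact Or.inl (lex_trans h h')
  · exact Or.inl (lex_trans_tie h h')
  · exact Or.inl (tie_lex_trans h h')
  · exact Or.inr ⟨fun j => (h j).trans (h' j), hxy.trans hyz⟩

lemma prec_irrefl {B : ℕ → Set (Fin n)} {x : Fin n} (h : prec B x x) : False := by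
  rcases h with h | ⟨_, h⟩
  · exact lex_irrefl h
  · exact lt_irrefl _ h

lemma prec_asymm {B : ℕ → Set (Fin n)} {x y : Fin n} (h : prec B x y) (h' : prec B y x) :
    False := prec_irrefl (prec_trans h h')

lemma lex_total_of_sep {B : ℕ → Set (Fin n)} {x y : Fin n}
    (h : ∃ j, ¬(x ∈ B j ↔ y ∈ B j)) : lex B x y ∨ lex B y x := by
  classical
  have hj := Nat.find_spec h
  have hmin := fun k (hk : k < Nat.find h) => Nat.find_min h hk
  set j := Nat.find h with hjdef
  have hpre : ∀ k, k < j → (x ∈ B k ↔ y ∈ B k) := fun k hk => not_not.mp (hmin k hk)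
  by_cases hx : x ∈ B j
  · by_cases hy : y ∈ B j
    · exact absurd (iff_of_true hx hy) hj
    · exact Or.inl ⟨j, hpre, hx, hy⟩
  · by_cases hy : y ∈ B j
    · exact Or.inr ⟨j, fun k hk => (hpre k hk).symm, hy, hx⟩
    · exact absurd (iff_of_false hx hy) hj

lemma prec_total {B : ℕ → Set (Fin n)} {x y : Fin n} (h : x ≠ y) :
    prec B x y ∨ prec B y x := by
  by_cases hsep : ∃ j, ¬(x ∈ B j ↔ y ∈ B j)
  · rcases lex_total_of_sep hsep with h' | h'
    · exact Or.inl (Or.inl h')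
    · exact Or.inr (Or.inl h')
  · push_neg at hsep
    rcases lt_or_gt_of_ne h with hlt | hlt
    · exact Or.inl (Or.inr ⟨hsep, hlt⟩)
    · exact Or.inr (Or.inr ⟨fun j => (hsep j).symm, hlt⟩)

/-- key convexity lemma: if x ≺ z ≺ y and x,y agree on all B j for j < m,
then x,z agree on all B j for j < m. -/
lemma convex {B : ℕ → Set (Fin n)} {x z y : Fin n} {m : ℕ}
    (hxz : prec B x z) (hzy : prec B z y)
    (hxy : ∀ j, j < m → (x ∈ B j ↔ y ∈ B j)) :
    ∀ j, j < m → (x ∈ B j ↔ z ∈ B j) := by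
  by_contra hc
  push_neg at hc
  obtain ⟨j, hjm, hjne'⟩ := hc
  have hjne : ¬ (x ∈ B j ↔ z ∈ B j) := by tauto
  -- x and z differ somewhere below m; so the lex witness of hxz is below m
  rcases hxz with hxz | ⟨htie, _⟩
  · obtain ⟨j0, hpre, hxj0, hzj0⟩ := hxz
    have hj0le : j0 ≤ j := by
      by_contra hgt
      exact hjne (hpre j (lt_of_not_ge hgt))
    have hj0m : j0 < m := lt_of_le_of_lt hj0le hjm
    have hyj0 : y ∈ B j0 := (hxy j0 hj0m).mp hxj0
    -- now z ∉ B j0, y ∈ B j0, and z ≺ y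
    rcases hzy with hzy | ⟨htie', _⟩
    · obtain ⟨j1, hpre', hzj1, hyj1⟩ := hzy
      have hj1le : j1 ≤ j0 := by
        by_contra hgt
        have := hpre' j0 (lt_of_not_ge hgt)
        exact hzj0 (this.mpr hyj0)
      rcases lt_or_eq_of_le hj1le with hlt | rfl
      · -- at j1 < j0 : x = z, x = y (j1 < m), but z ∈, y ∉
        have h1 : x ∈ B j1 ↔ z ∈ B j1 := hpre j1 hlt
        have h2 : x ∈ B j1 ↔ y ∈ B j1 := hxy j1 (lt_trans hlt hj0m)
        exact hyj1 (h2.mp (h1.mpr hzj1))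
      · exact hzj0 hzj1
    · exact hzj0 ((htie' j0).mpr hyj0)
  · exact hjne (htie j)


open Classical in
noncomputable def rank (B : ℕ → Set (Fin n)) (x : Fin n) : ℕ :=
  (Finset.univ.filter (fun z => prec B z x)).card

open Classical in
lemma rank_lt_card (B : ℕ → Set (Fin n)) (x : Fin n) : rank B x < n := by
  have h : (Finset.univ.filter (fun z => prec B z x)) ⊂ Finset.univ := by
    refine Finset.ssubset_iff_of_subset (Finset.subset_univ _) |>.mpr ?_
    exact ⟨x, Finset.mem_univ x, by
      simp only [Finset.mem_filter, Finset.mem_univ, true_and]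
      exact prec_irrefl⟩
  simpa [rank] using Finset.card_lt_card h

open Classical in
lemma rank_lt_rank {B : ℕ → Set (Fin n)} {x y : Fin n} (h : prec B x y) :
    rank B x < rank B y := by
  apply Finset.card_lt_card
  constructor
  · intro z hz
    simp only [Finset.mem_filter, Finset.mem_univ, true_and] at hz ⊢
    exact prec_trans hz h
  · intro hsub
    have := hsub (by simp [h] : x ∈ Finset.univ.filter (fun z => prec B z y))
    simp only [Finset.mem_filter, Finset.mem_univ, true_and] at this
    exact prec_irrefl this

lemma prec_iff_rank {B : ℕ → Set (Fin n)} {x y : Fin n} :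
    prec B x y ↔ rank B x < rank B y := by
  constructor
  · exact rank_lt_rank
  · intro h
    rcases eq_or_ne x y with rfl | hne
    · exact absurd h (lt_irrefl _)
    · rcases prec_total hne with h' | h'
      · exact h'
      · exact absurd (rank_lt_rank h') (not_lt.mpr h.le)

noncomputable def sigmaFun (B : ℕ → Set (Fin n)) (x : Fin n) : Fin n :=
  ⟨rank B x, rank_lt_card B x⟩

lemma sigmaFun_injective (B : ℕ → Set (Fin n)) : Function.Injective (sigmaFun B) := by
  intro x y hxy
  by_contra hne
  have h : rank B x = rank B y := congrArg Fin.val hxy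
  rcases prec_total hne with h' | h'
  · exact absurd h (ne_of_lt (rank_lt_rank h'))
  · exact absurd h.symm (ne_of_lt (rank_lt_rank h'))

noncomputable def sigma (B : ℕ → Set (Fin n)) : Fin n ≃ Fin n :=
  Equiv.ofBijective (sigmaFun B) (Finite.injective_iff_bijective.mp (sigmaFun_injective B))

lemma sigma_lt_iff {B : ℕ → Set (Fin n)} {x y : Fin n} :
    sigma B x < sigma B y ↔ prec B x y := by
  show sigmaFun B x < sigmaFun B y ↔ _
  rw [Fin.lt_def]
  exact prec_iff_rank.symm

/-- the run of the deterministic algorithm against the adversary's order -/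
noncomputable def S (strat : (Fin n → Fin n → Prop) → Set (Fin n)) : ℕ → Set (Fin n)
  | i => strat (fun a b => Relation.TransGen
      (fun x y => ∃ j, ∃ _ : j < i,
        (∀ k, (_ : k < j) → (x ∈ S strat k ↔ y ∈ S strat k)) ∧
          x ∈ S strat j ∧ y ∉ S strat j) a b)
  decreasing_by all_goals omega


lemma S_eq (strat : (Fin n → Fin n → Prop) → Set (Fin n)) (i : ℕ) :
    S strat i = strat (fun a b => Relation.TransGen
      (fun x y => ∃ j, ∃ _ : j < i,
        (∀ k, k < j → (x ∈ S strat k ↔ y ∈ S strat k)) ∧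
          x ∈ S strat j ∧ y ∉ S strat j) a b) := by
  rw [S]

lemma step_iff {B : ℕ → Set (Fin n)} {i : ℕ} {x y : Fin n} :
    (∃ j, ∃ _ : j < i, (∀ k, k < j → (x ∈ B k ↔ y ∈ B k)) ∧ x ∈ B j ∧ y ∉ B j)
      ↔ (prec B x y ∧ ∃ j, j < i ∧ ¬(x ∈ B j ↔ y ∈ B j)) := by
  classical
  constructor
  · rintro ⟨j, hj, hpre, hx, hy⟩
    exact ⟨Or.inl ⟨j, hpre, hx, hy⟩, j, hj, by tauto⟩
  · rintro ⟨hprec, j, hj, hne⟩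
    have hex : ∃ j, ¬(x ∈ B j ↔ y ∈ B j) := ⟨j, hne⟩
    have hj0 := Nat.find_spec hex
    have hj0le : Nat.find hex ≤ j := Nat.find_le hne
    have hpre : ∀ k, k < Nat.find hex → (x ∈ B k ↔ y ∈ B k) :=
      fun k hk => not_not.mp (Nat.find_min hex hk)
    by_cases hx : x ∈ B (Nat.find hex)
    · by_cases hy : y ∈ B (Nat.find hex)
      · exact absurd (iff_of_true hx hy) hj0
      · exact ⟨Nat.find hex, lt_of_le_of_lt hj0le hj, hpre, hx, hy⟩
    · by_cases hy : y ∈ B (Nat.find hex)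
      · exact absurd hprec (fun h => prec_asymm h
          (Or.inl ⟨Nat.find hex, fun k hk => (hpre k hk).symm, hy, hx⟩))
      · exact absurd (iff_of_false hx hy) hj0

lemma transGen_prec {B : ℕ → Set (Fin n)} {x y : Fin n} {m : ℕ}
    (h : Relation.TransGen
      (fun a b => prec B a b ∧ ∃ j, j < m ∧ ¬(a ∈ B j ↔ b ∈ B j)) x y) :
    prec B x y := by
  induction h with
  | single h => exact h.1
  | tail _ h ih => exact prec_trans ih h.1

lemma no_chain {B : ℕ → Set (Fin n)} {x y : Fin n} {m : ℕ}
    (hxy : ∀ j, j < m → (x ∈ B j ↔ y ∈ B j))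
    (chain : Relation.TransGen
      (fun a b => prec B a b ∧ ∃ j, j < m ∧ ¬(a ∈ B j ↔ b ∈ B j)) x y) :
    False := by
  obtain ⟨w, hxw, hwy'⟩ := Relation.TransGen.head'_iff.mp chain
  rcases Relation.reflTransGen_iff_eq_or_transGen.mp hwy' with rfl | hwy
  · obtain ⟨_, j, hj, hne⟩ := hxw
    exact hne (hxy j hj)
  · have hprecwy : prec B w y := transGen_prec hwy
    have hxw' : ∀ j, j < m → (x ∈ B j ↔ w ∈ B j) := convex hxw.1 hprecwy hxy
    obtain ⟨_, j, hj, hne⟩ := hxw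
    exact hne (hxw' j hj)

end Stmt18Aux


open Stmt18Aux



/-- Any deterministic adaptive algorithm (`strat`, choosing the next intervention set as a
function of the directions learned so far) that learns every transitive tournament
orientation of `K_n` — where intervening on `S` reveals the cut edges of `S` (rule R0) and
the knowledge is closed under Meek rule R2 (transitive closure) — must, for some orientation
`σ`, produce a family of intervention sets that is a separating system on the `n` vertices.
Here `seq σ` is the sequence of interventions the algorithm produces against orientation
`σ`, and the learned relation after `m` interventions is the transitive closure of the
revealed cut directions. -/
theorem stmt18 (n : ℕ)
    (strat : (Fin n → Fin n → Prop) → Set (Fin n))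
    (seq : (Fin n ≃ Fin n) → ℕ → Set (Fin n))
    (hseq : ∀ (σ : Fin n ≃ Fin n) (m : ℕ),
      seq σ m = strat (fun a b : Fin n => Relation.TransGen
        (fun x y : Fin n => σ x < σ y ∧
          ∃ i < m, (x ∈ seq σ i ∧ y ∉ seq σ i) ∨ (y ∈ seq σ i ∧ x ∉ seq σ i)) a b))
    (hlearn : ∀ σ : Fin n ≃ Fin n, ∃ m : ℕ, ∀ a b : Fin n, σ a < σ b →
      Relation.TransGen
        (fun x y : Fin n => σ x < σ y ∧
          ∃ i < m, (x ∈ seq σ i ∧ y ∉ seq σ i) ∨ (y ∈ seq σ i ∧ x ∉ seq σ i)) a b) :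
    ∃ σ : Fin n ≃ Fin n, ∀ m : ℕ,
      (∀ a b : Fin n, σ a < σ b →
        Relation.TransGen
          (fun x y : Fin n => σ x < σ y ∧
            ∃ i < m, (x ∈ seq σ i ∧ y ∉ seq σ i) ∨ (y ∈ seq σ i ∧ x ∉ seq σ i)) a b) →
      ∀ u v : Fin n, u ≠ v → ∃ i < m,
        (u ∈ seq σ i ∧ v ∉ seq σ i) ∨ (v ∈ seq σ i ∧ u ∉ seq σ i) := by
  classical
  set σ := sigma (S strat) with hσdef
  have hseqS : ∀ i, seq σ i = S strat i := by
    intro i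
    induction i using Nat.strong_induction_on with
    | _ i ih =>
      have hrel : (fun x y : Fin n => σ x < σ y ∧
            ∃ j < i, (x ∈ seq σ j ∧ y ∉ seq σ j) ∨ (y ∈ seq σ j ∧ x ∉ seq σ j)) =
          (fun x y : Fin n => ∃ j, ∃ _ : j < i,
            (∀ k, k < j → (x ∈ S strat k ↔ y ∈ S strat k)) ∧
              x ∈ S strat j ∧ y ∉ S strat j) := by
        funext x y
        apply propext
        rw [step_iff, hσdef, sigma_lt_iff]
        refine and_congr Iff.rfl ?_
        constructor
        · rintro ⟨j, hj, hsep⟩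
          rw [ih j hj] at hsep
          exact ⟨j, hj, by tauto⟩
        · rintro ⟨j, hj, hsep⟩
          refine ⟨j, hj, ?_⟩
          rw [ih j hj]
          tauto
      rw [hseq σ i, S_eq strat i, hrel]
  refine ⟨σ, ?_⟩
  intro m hm u v huv
  have hne' : σ u ≠ σ v := fun h => huv (σ.injective h)
  by_contra hno
  have hagree : ∀ j, j < m → (u ∈ S strat j ↔ v ∈ S strat j) := by
    intro j hj
    have h1 : ¬((u ∈ seq σ j ∧ v ∉ seq σ j) ∨ (v ∈ seq σ j ∧ u ∉ seq σ j)) :=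
      fun h => hno ⟨j, hj, h⟩
    rw [hseqS j] at h1
    tauto
  have hmono : ∀ x y : Fin n, (σ x < σ y ∧
        ∃ i < m, (x ∈ seq σ i ∧ y ∉ seq σ i) ∨ (y ∈ seq σ i ∧ x ∉ seq σ i)) →
      (prec (S strat) x y ∧ ∃ j, j < m ∧ ¬(x ∈ S strat j ↔ y ∈ S strat j)) := by
    rintro x y ⟨hlt, j, hj, hsep⟩
    rw [hσdef, sigma_lt_iff] at hlt
    rw [hseqS j] at hsep
    exact ⟨hlt, j, hj, by tauto⟩
  rcases lt_or_gt_of_ne hne' with h | h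
  · exact no_chain hagree (Relation.TransGen.mono hmono _ _ (hm u v h))
  · exact no_chain (fun j hj => (hagree j hj).symm) (Relation.TransGen.mono hmono _ _ (hm v u h))
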